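/- Polarized form of the odd Jacobi identity: for all s, t, u ∈ ℂ⁸ one has 2(t̄u)·s − (t̄s)·u − (ūs)·t = (1/6)·Σ_{μ,ν=1}^{7}[ (s̄Γ_{μν}t)·Γ_{μν}u + (s̄Γ_{μν}u)·Γ_{μν}t ] in ℂ⁸. -/

import Mathlib

open Matrix

noncomputable section

/-- The antisymmetrized product `Γ_{μν} = (1/2)(Γ_μΓ_ν − Γ_νΓ_μ)`. -/
def gamma2 (Γ : Fin 7 → Matrix (Fin 8) (Fin 8) ℂ) (μ ν : Fin 7) :
    Matrix (Fin 8) (Fin 8) ℂ :=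
  (2 : ℂ)⁻¹ • (Γ μ * Γ ν - Γ ν * Γ μ)

namespace OJ
variable {Γ : Fin 7 → Matrix (Fin 8) (Fin 8) ℂ}
  (hΓ : ∀ μ ν, Γ μ * Γ ν + Γ ν * Γ μ =
      if μ = ν then (-2 : ℂ) • (1 : Matrix (Fin 8) (Fin 8) ℂ) else 0)

abbrev M8 := Matrix (Fin 8) (Fin 8) ℂ
def G (Γ : Fin 7 → Matrix (Fin 8) (Fin 8) ℂ) (l : List (Fin 7)) : M8 := (l.map Γ).prod
@[simp] lemma G_nil : G Γ [] = 1 := rfl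
@[simp] lemma G_cons (μ : Fin 7) (l : List (Fin 7)) : G Γ (μ :: l) = Γ μ * G Γ l := by simp [G]
lemma G_append (l l' : List (Fin 7)) : G Γ (l ++ l') = G Γ l * G Γ l' := by simp [G]

/-- e n = n(n+1)/2 -/
def e : ℕ → ℕ
  | 0 => 0
  | n+1 => e n + n + 1

include hΓ
lemma sq_eq (μ : Fin 7) : Γ μ * Γ μ = -1 := by
  have h := hΓ μ μ
  rw [if_pos rfl] at h
  have : (2:ℂ) • (Γ μ * Γ μ) = (2:ℂ) • (-1 : M8) := by rw [two_smul, h]; ext i j; simp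
  exact smul_right_injective _ (by norm_num) this
lemma anti (μ ν : Fin 7) (h : μ ≠ ν) : Γ μ * Γ ν = -(Γ ν * Γ μ) := by
  have h2 := hΓ μ ν
  rw [if_neg h] at h2
  linear_combination (norm := abel) h2
lemma swap (μ ν : Fin 7) :
    Γ ν * Γ μ = ((-1:ℂ) ^ (if μ ≠ ν then 1 else 0)) • (Γ μ * Γ ν) := by
  by_cases h : μ = ν
  · subst h; simp
  · rw [if_pos h, pow_one, anti hΓ ν μ (Ne.symm h)]; simp
lemma move (ν : Fin 7) (l : List (Fin 7)) :
    Γ ν * G Γ l = ((-1:ℂ) ^ (l.countP (fun x => x ≠ ν))) • (G Γ l * Γ ν) := by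
  induction l with
  | nil => simp
  | cons μ l ih =>
    rw [G_cons, ← mul_assoc, swap hΓ μ ν, smul_mul_assoc, mul_assoc, ih, mul_smul_comm,
      smul_smul, ← pow_add, List.countP_cons]
    rw [← mul_assoc]
    congr 2
    by_cases h : μ = ν
    · subst h; simp
    · simp [h, add_comm]
lemma move' (ν : Fin 7) (l : List (Fin 7)) :
    G Γ l * Γ ν = ((-1:ℂ) ^ (l.countP (fun x => x ≠ ν))) • (Γ ν * G Γ l) := by
  rw [move hΓ, smul_smul, ← pow_add, ← two_mul, pow_mul]
  norm_num
lemma trace_G_eq_zero (l : List (Fin 7)) (ν : Fin 7)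
    (hodd : Odd (l.countP (fun x => x ≠ ν))) : trace (G Γ l) = 0 := by
  have h1 : trace (Γ ν * (G Γ l * Γ ν)) = trace (G Γ l * (Γ ν * Γ ν)) := by
    rw [trace_mul_comm, mul_assoc]
  rw [sq_eq hΓ] at h1
  have h2 : trace (Γ ν * (G Γ l * Γ ν)) =
      ((-1:ℂ) ^ (l.countP (fun x => x ≠ ν))) * trace (G Γ l * (Γ ν * Γ ν)) := by
    rw [← mul_assoc, move hΓ, smul_mul_assoc, trace_smul, mul_assoc, smul_eq_mul]
  rw [sq_eq hΓ, hodd.neg_one_pow] at h2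
  rw [h2] at h1
  have h3 : (2:ℂ) * trace (G Γ l * (-1 : M8)) = 0 := by linear_combination -h1
  field_simp at h3
  simpa using (mul_eq_zero.mp h3).resolve_left two_ne_zero

omit hΓ in
lemma countP_ne_of_not_mem {ν : Fin 7} {l : List (Fin 7)} (h : ν ∉ l) :
    l.countP (fun x => x ≠ ν) = l.length := by
  apply List.countP_eq_length.mpr
  intro a ha
  simp only [ne_eq, decide_eq_true_eq, decide_not, Bool.not_eq_true']
  simp only [decide_eq_false_iff_not]
  exact fun hx => h (hx ▸ ha)

omit hΓ in
lemma countP_ne_of_mem {ν : Fin 7} {l : List (Fin 7)} (hl : l.Nodup) (h : ν ∈ l) :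
    l.countP (fun x => x ≠ ν) + 1 = l.length := by
  have hc : l.count ν = 1 := List.count_eq_one_of_mem hl h
  have h1 := List.length_eq_countP_add_countP (fun x => decide (x ≠ ν)) (l := l)
  have h2 : l.countP (fun a => !decide (a ≠ ν)) = l.count ν := by
    rw [List.count]
    apply List.countP_congr
    intro a _
    by_cases hx : a = ν <;> simp [hx]
  have h3 : List.countP (fun a => decide ¬decide (a ≠ ν) = true) l
      = List.countP (fun a => !decide (a ≠ ν)) l := by
    apply List.countP_congr
    intro a _
    by_cases hx : a = ν <;> simp [hx]
  rw [h3, h2, hc] at h1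
  omega

lemma G_mul_self (l : List (Fin 7)) (hl : l.Nodup) :
    ∃ ε : ℂ, (ε = 1 ∨ ε = -1) ∧ G Γ l * G Γ l = ε • 1 := by
  induction l with
  | nil => exact ⟨1, Or.inl rfl, by simp⟩
  | cons μ l ih =>
    obtain ⟨ε, hε, hsq⟩ := ih (List.Nodup.of_cons hl)
    have hμ : μ ∉ l := by simp [List.nodup_cons] at hl; exact hl.1
    refine ⟨-((-1:ℂ)^l.length * ε), ?_, ?_⟩
    · rcases hε with h | h <;> rcases Nat.even_or_odd l.length with he | he <;>
        rw [h, he.neg_one_pow] <;> norm_num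
    · have key : Γ μ * G Γ l * (Γ μ * G Γ l)
          = ((-1:ℂ)^l.length) • (Γ μ * Γ μ * (G Γ l * G Γ l)) := by
        rw [mul_assoc, ← mul_assoc (G Γ l), move' hΓ, countP_ne_of_not_mem hμ]
        simp only [smul_mul_assoc, mul_smul_comm, mul_assoc]
      rw [G_cons, key, sq_eq hΓ, hsq]
      rw [mul_smul_comm, smul_smul, neg_one_mul, neg_smul, ← smul_smul, smul_smul, smul_neg]

lemma Gamma_conj (ν : Fin 7) (l : List (Fin 7)) :
    Γ ν * G Γ l * Γ ν = (-(-1:ℂ) ^ (l.countP (fun x => x ≠ ν))) • G Γ l := by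
  rw [move hΓ, smul_mul_assoc, mul_assoc, sq_eq hΓ]
  rw [mul_neg_one, smul_neg, neg_smul]

/-- the T operator eigenvalue on a nodup product -/
lemma T_eigen (l : List (Fin 7)) (hl : l.Nodup) :
    ∑ ν : Fin 7, Γ ν * G Γ l * Γ ν
      = (((-1:ℂ) ^ l.length) * (2 * l.length - 7)) • G Γ l := by
  have key : ∀ ν : Fin 7, Γ ν * G Γ l * Γ ν
      = (if ν ∈ l then ((-1:ℂ)^l.length) else -(-1:ℂ)^l.length) • G Γ l := by
    intro ν
    rw [Gamma_conj hΓ]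
    congr 1
    by_cases h : ν ∈ l
    · rw [if_pos h, ← countP_ne_of_mem hl h, pow_succ]
      ring
    · rw [if_neg h, countP_ne_of_not_mem h]
  simp only [key, ← Finset.sum_smul]
  congr 1
  rw [Finset.sum_ite, Finset.sum_const, Finset.sum_const]
  have hfil : (Finset.univ.filter (fun ν => ν ∈ l)) = l.toFinset := by
    ext x; simp
  have hcard : l.toFinset.card = l.length := List.toFinset_card_of_nodup hl
  have hle : l.length ≤ 7 := by
    have := l.toFinset.card_le_univ
    simpa [hcard] using this
  have hfil2 : (Finset.univ.filter (fun ν => ν ∉ l)).card = 7 - l.length := by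
    have := Finset.card_filter_add_card_filter_not
      (s := (Finset.univ : Finset (Fin 7))) (p := fun ν => ν ∈ l)
    rw [hfil, hcard] at this
    simp only [Finset.card_univ, Fintype.card_fin] at this
    omega
  rw [hfil, hcard, hfil2]
  have : ((7 - l.length : ℕ) : ℂ) = 7 - (l.length : ℂ) := by
    push_cast [Nat.cast_sub hle]; ring
  simp only [nsmul_eq_mul, this]
  ring


omit hΓ in
lemma e_vals : e 0 = 0 ∧ e 1 = 1 ∧ e 2 = 3 ∧ e 3 = 6 := by
  refine ⟨rfl, rfl, rfl, rfl⟩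

variable {C : Matrix (Fin 8) (Fin 8) ℂ} (hCΓ : ∀ μ, (Γ μ)ᵀ * C = -(C * Γ μ))

include hCΓ in
lemma transpose_G (l : List (Fin 7)) (hl : l.Nodup) :
    (G Γ l)ᵀ * C = ((-1:ℂ) ^ (e l.length)) • (C * G Γ l) := by
  induction l with
  | nil => simp [e]
  | cons μ l ih =>
    have hμ : μ ∉ l := (List.nodup_cons.mp hl).1
    have hln := (List.nodup_cons.mp hl).2
    rw [G_cons, transpose_mul, mul_assoc, hCΓ, mul_neg, ← mul_assoc, ih hln,
      smul_mul_assoc, mul_assoc, move' hΓ, countP_ne_of_not_mem hμ, mul_smul_comm,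
      smul_smul, ← pow_add, ← neg_smul]
    congr 1
    have he : e (μ :: l).length = e l.length + l.length + 1 := rfl
    rw [he, pow_add, pow_add, pow_one]
    ring

/-- sorted product associated to a finset -/
def bS (Γ : Fin 7 → Matrix (Fin 8) (Fin 8) ℂ) (S : Finset (Fin 7)) : M8 :=
  G Γ (S.sort (· ≤ ·))

omit hΓ in
lemma countP_sort_mem {S : Finset (Fin 7)} {ν : Fin 7} (h : ν ∈ S) :
    (S.sort (· ≤ ·)).countP (fun x => x ≠ ν) + 1 = S.card := by
  rw [countP_ne_of_mem (S.sort_nodup _) ((Finset.mem_sort _).mpr h), Finset.length_sort]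

omit hΓ in
lemma countP_sort_not_mem {S : Finset (Fin 7)} {ν : Fin 7} (h : ν ∉ S) :
    (S.sort (· ≤ ·)).countP (fun x => x ≠ ν) = S.card := by
  rw [countP_ne_of_not_mem (fun hx => h ((Finset.mem_sort _).mp hx)), Finset.length_sort]

lemma trace_pair_zero (S T : Finset (Fin 7)) (hS : S.card ≤ 3) (hT : T.card ≤ 3)
    (hne : S ≠ T) : trace (bS Γ S * bS Γ T) = 0 := by
  rw [bS, bS, ← G_append]
  by_cases hpar : Even (S.card + T.card)
  · have hsd : (symmDiff S T).Nonempty := by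
      rw [Finset.symmDiff_nonempty]
      exact hne
    obtain ⟨ν, hν⟩ := hsd
    rw [Finset.mem_symmDiff] at hν
    apply trace_G_eq_zero hΓ _ ν
    rw [List.countP_append]
    rcases hν with ⟨h1, h2⟩ | ⟨h1, h2⟩
    · have a1 := countP_sort_mem (S := S) h1
      have a2 := countP_sort_not_mem (S := T) h2
      rw [Nat.odd_iff]; rw [Nat.even_iff] at hpar; omega
    · have a1 := countP_sort_not_mem (S := S) h2
      have a2 := countP_sort_mem (S := T) h1
      rw [Nat.odd_iff]; rw [Nat.even_iff] at hpar; omega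
  · have hcard : (S ∪ T)ᶜ.Nonempty := by
      rw [← Finset.card_pos, Finset.card_compl]
      have := Finset.card_union_le S T
      simp only [Fintype.card_fin]
      omega
    obtain ⟨ν, hν⟩ := hcard
    rw [Finset.mem_compl, Finset.mem_union] at hν
    push_neg at hν
    apply trace_G_eq_zero hΓ _ ν
    rw [List.countP_append, countP_sort_not_mem hν.1, countP_sort_not_mem hν.2]
    rw [Nat.odd_iff]; rw [Nat.even_iff] at hpar; omega

lemma trace_pair_diag (S : Finset (Fin 7)) :
    ∃ ε : ℂ, (ε = 1 ∨ ε = -1) ∧ trace (bS Γ S * bS Γ S) = ε * 8 := by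
  obtain ⟨ε, hε, hsq⟩ := G_mul_self hΓ (S.sort (· ≤ ·)) (S.sort_nodup _)
  refine ⟨ε, hε, ?_⟩
  rw [bS, hsq, trace_smul, trace_one, smul_eq_mul]
  norm_num

def idx : Type := {S : Finset (Fin 7) // S.card ≤ 3}

instance : Fintype idx := by unfold idx; infer_instance
instance : DecidableEq idx := by unfold idx; infer_instance
instance : Nonempty idx := ⟨⟨∅, by simp⟩⟩

omit hΓ in
lemma card_idx : Fintype.card idx = 64 := by decide

lemma lin_indep : LinearIndependent ℂ (fun i : idx => bS Γ i.1) := by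
  rw [Fintype.linearIndependent_iff]
  intro g hg j
  have h0 : trace ((∑ i : idx, g i • bS Γ i.1) * bS Γ j.1) = 0 := by rw [hg]; simp
  rw [Finset.sum_mul, trace_sum] at h0
  simp only [smul_mul_assoc, trace_smul, smul_eq_mul] at h0
  obtain ⟨ε, hε, hdiag⟩ := trace_pair_diag hΓ j.1
  rw [Finset.sum_eq_single j] at h0
  · rw [hdiag] at h0
    rcases hε with h | h <;> rw [h] at h0 <;> norm_num at h0 <;> exact h0
  · intro i _ hij
    rw [trace_pair_zero hΓ i.1 j.1 i.2 j.2 (fun hc => hij (Subtype.ext hc)), mul_zero]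
  · intro h
    exact absurd (Finset.mem_univ j) h


lemma exists_coeffs (X : M8) : ∃ c : idx → ℂ, ∑ i : idx, c i • bS Γ i.1 = X := by
  have hcard : Fintype.card idx = Module.finrank ℂ M8 := by
    rw [card_idx, Module.finrank_matrix]
    simp
  have hs := (lin_indep hΓ).span_eq_top_of_card_eq_finrank hcard
  have hX : X ∈ Submodule.span ℂ (Set.range fun i : idx => bS Γ i.1) := by
    rw [hs]; trivial
  exact (Submodule.mem_span_range_iff_exists_fun ℂ).mp hX


def iempty : idx := ⟨∅, by simp⟩

omit hΓ in
lemma bS_empty : bS Γ (∅ : Finset (Fin 7)) = 1 := by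
  rw [bS, Finset.sort_empty, G_nil]

include hCΓ in
lemma key_lemma (hCunit : IsUnit C) (X : M8) (hX : Xᵀ * C = C * X) :
    ∑ ν : Fin 7, Γ ν * X * Γ ν = X - (trace X) • 1 := by
  obtain ⟨c, hc⟩ := exists_coeffs hΓ X
  -- Step 1 : coefficients of degree 1, 2 vanish
  have hzero : ∀ i : idx, i.1.card = 1 ∨ i.1.card = 2 → c i = 0 := by
    have hXT : Xᵀ * C = C * ∑ i : idx, (c i * (-1:ℂ) ^ e i.1.card) • bS Γ i.1 := by
      rw [← hc, transpose_sum, Finset.sum_mul, Finset.mul_sum]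
      apply Finset.sum_congr rfl
      intro i _
      simp only [bS, transpose_smul, smul_mul_assoc]
      rw [transpose_G hΓ hCΓ _ (Finset.sort_nodup _ _), Finset.length_sort, smul_smul,
        mul_smul_comm, mul_comm (c i)]
    have hXC : Xᵀ * C = C * ∑ i : idx, c i • bS Γ i.1 := by rw [hc, hX]
    have hcancel : ∑ i : idx, (c i * (-1:ℂ) ^ e i.1.card) • bS Γ i.1
        = ∑ i : idx, c i • bS Γ i.1 :=
      hCunit.mul_left_cancel (by rw [← hXT, ← hXC])
    have hcomb : ∑ i : idx, (c i * (-1:ℂ) ^ e i.1.card - c i) • bS Γ i.1 = 0 := by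
      simp only [sub_smul, Finset.sum_sub_distrib, hcancel, sub_self]
    have hall := Fintype.linearIndependent_iff.mp (lin_indep hΓ) _ hcomb
    intro i hi
    have := hall i
    rcases hi with h | h <;> rw [h] at this <;>
      [(have he1 : e 1 = 1 := rfl; rw [he1] at this);
       (have he2 : e 2 = 3 := rfl; rw [he2] at this)] <;>
    · simp only [pow_one, pow_succ, pow_zero, mul_neg, mul_one, neg_neg] at this
      have : c i * (-2) = 0 := by linear_combination this
      simpa using this
  -- Step 2 : trace of basis elements
  have htrb : ∀ i : idx, i ≠ iempty → c i * trace (bS Γ i.1) = 0 := by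
    intro i hi
    have hcases : i.1.card = 1 ∨ i.1.card = 2 ∨ i.1.card = 3 := by
      have h3 := i.2
      have h0 : i.1.card ≠ 0 := by
        intro h
        exact hi (Subtype.ext (Finset.card_eq_zero.mp h))
      omega
    rcases hcases with h | h | h
    · rw [hzero i (Or.inl h), zero_mul]
    · rw [hzero i (Or.inr h), zero_mul]
    · -- card = 3 : trace vanishes, pick ν outside S
      have hex : ∃ ν : Fin 7, ν ∉ i.1 := by
        by_contra hcon
        push_neg at hcon
        have : Finset.univ ⊆ i.1 := fun x _ => hcon x
        have := Finset.card_le_card this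
        simp [h] at this
      obtain ⟨ν, hν⟩ := hex
      rw [bS, trace_G_eq_zero hΓ _ ν (by rw [countP_sort_not_mem hν, h]; decide), mul_zero]
  have htrace : trace X = 8 * c iempty := by
    rw [← hc, trace_sum]
    simp only [trace_smul, smul_eq_mul]
    rw [Finset.sum_eq_single iempty]
    · have hb : bS Γ (iempty.1) = 1 := bS_empty
      rw [hb, trace_one]
      norm_num [mul_comm]
    · intro i _ hi
      exact htrb i hi
    · intro h
      exact absurd (Finset.mem_univ _) h
  -- Step 3 : eigenvalue computation
  have hT : ∑ ν : Fin 7, Γ ν * X * Γ ν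
      = ∑ i : idx, (c i * ((-1:ℂ) ^ i.1.card * (2 * i.1.card - 7))) • bS Γ i.1 := by
    rw [← hc]
    simp only [Finset.mul_sum, Finset.sum_mul]
    rw [Finset.sum_comm]
    apply Finset.sum_congr rfl
    intro i _
    calc ∑ ν : Fin 7, Γ ν * (c i • bS Γ i.1) * Γ ν
        = c i • ∑ ν : Fin 7, Γ ν * bS Γ i.1 * Γ ν := by
          rw [Finset.smul_sum]
          apply Finset.sum_congr rfl
          intro ν _
          rw [mul_smul_comm, smul_mul_assoc]
      _ = _ := by
          simp only [bS]
          rw [T_eigen hΓ _ (Finset.sort_nodup _ _), Finset.length_sort, smul_smul]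
  rw [hT, htrace, ← hc]
  have hone : (8 * c iempty) • (1 : M8)
      = ∑ i : idx, (if i = iempty then (8 * c iempty) • bS Γ i.1 else 0) := by
    rw [Finset.sum_ite_eq' Finset.univ iempty (fun i => (8 * c iempty) • bS Γ i.1)]
    rw [if_pos (Finset.mem_univ _)]
    have hb : bS Γ (iempty.1) = 1 := bS_empty
    rw [hb]
  rw [hone, ← Finset.sum_sub_distrib]
  apply Finset.sum_congr rfl
  intro i _
  by_cases hi : i = iempty
  · subst hi
    rw [if_pos rfl, ← sub_smul]
    congr 1
    have hcard0 : (iempty.1).card = 0 := rfl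
    rw [hcard0]
    push_cast
    ring
  · rw [if_neg hi, sub_zero]
    have h3 := i.2
    have h0 : i.1.card ≠ 0 := fun h => hi (Subtype.ext (Finset.card_eq_zero.mp h))
    have hcc : i.1.card = 1 ∨ i.1.card = 2 ∨ i.1.card = 3 := by omega
    rcases hcc with h | h | h
    · rw [hzero i (Or.inl h)]; simp
    · rw [hzero i (Or.inr h)]; simp
    · congr 1
      rw [h]
      norm_num


-- vecMulVec helpers
omit hΓ in
lemma vmv_mulVec (x y s : Fin 8 → ℂ) :
    (vecMulVec x y).mulVec s = (y ⬝ᵥ s) • x := by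
  funext i
  simp [vecMulVec_apply, mulVec, dotProduct, Finset.mul_sum, Finset.sum_mul, mul_comm,
    mul_assoc, mul_left_comm]

omit hΓ in
lemma vmv_left (M : M8) (x y : Fin 8 → ℂ) :
    vecMulVec (M.mulVec x) y = M * vecMulVec x y := by
  ext i j
  simp [vecMulVec_apply, mulVec, dotProduct, Matrix.mul_apply, Finset.sum_mul, mul_assoc]

omit hΓ in
lemma vmv_right (M : M8) (x y : Fin 8 → ℂ) :
    vecMulVec x (M.mulVec y) = vecMulVec x y * Mᵀ := by
  ext i j
  simp [vecMulVec_apply, mulVec, dotProduct, Matrix.mul_apply, Finset.mul_sum, mul_assoc,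
    mul_comm, mul_left_comm]

omit hΓ in
lemma trace_vmv (x y : Fin 8 → ℂ) (M : M8) :
    trace (vecMulVec x y * M) = y ⬝ᵥ M.mulVec x := by
  simp [trace, Matrix.mul_apply, vecMulVec_apply, diag, dotProduct, mulVec, Finset.mul_sum]
  rw [Finset.sum_comm]
  apply Finset.sum_congr rfl
  intro i _
  apply Finset.sum_congr rfl
  intro j _
  ring

-- gamma2 lemmas
omit hΓ in
lemma gamma2_diag (μ : Fin 7) : gamma2 Γ μ μ = 0 := by
  simp [gamma2]

lemma gamma2_off {μ ν : Fin 7} (h : μ ≠ ν) : gamma2 Γ μ ν = Γ μ * Γ ν := by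
  rw [gamma2, anti hΓ μ ν h]
  have h2 : -(Γ ν * Γ μ) - Γ ν * Γ μ = (-2:ℂ) • (Γ ν * Γ μ) := by
    rw [neg_smul, two_smul]
    abel
  rw [h2, smul_smul]
  norm_num

include hCΓ in
lemma gamma2_transpose (μ ν : Fin 7) :
    (gamma2 Γ μ ν)ᵀ * C = -(C * gamma2 Γ μ ν) := by
  rw [gamma2, transpose_smul, smul_mul_assoc, mul_smul_comm, ← smul_neg]
  congr 1
  rw [transpose_sub, sub_mul, transpose_mul, transpose_mul, mul_assoc, mul_assoc,
    hCΓ μ, hCΓ ν, mul_neg, mul_neg, ← mul_assoc, ← mul_assoc, hCΓ ν, hCΓ μ]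
  simp only [neg_mul, neg_neg, mul_assoc]
  rw [mul_sub, neg_sub]


omit hΓ in
lemma vmv_transpose (x y : Fin 8 → ℂ) : (vecMulVec x y)ᵀ = vecMulVec y x := by
  ext i j
  simp [vecMulVec_apply, mul_comm]

lemma conj_pair (X : M8) (μ ν : Fin 7) :
    Γ ν * (Γ μ * X * Γ μ) * Γ ν
      = -(gamma2 Γ μ ν * X * gamma2 Γ μ ν) + (if μ = ν then X else 0) := by
  by_cases h : μ = ν
  · subst h
    rw [gamma2_diag, if_pos rfl]
    rw [show Γ μ * (Γ μ * X * Γ μ) * Γ μ = (Γ μ * Γ μ) * X * (Γ μ * Γ μ) from by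
      simp only [mul_assoc]]
    rw [sq_eq hΓ]
    simp
  · rw [if_neg h, gamma2_off hΓ h, add_zero]
    rw [show Γ ν * (Γ μ * X * Γ μ) * Γ ν = (Γ ν * Γ μ) * X * (Γ μ * Γ ν) from by
      simp only [mul_assoc]]
    rw [anti hΓ ν μ (Ne.symm h)]
    simp only [neg_mul, mul_assoc]

include hCΓ in
lemma Phi_eq (hCunit : IsUnit C) (X : M8) (hX : Xᵀ * C = C * X) :
    ∑ μ : Fin 7, ∑ ν : Fin 7, gamma2 Γ μ ν * X * gamma2 Γ μ ν
      = (6:ℂ) • X - (6 * trace X) • 1 := by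
  have h1 := key_lemma hΓ hCΓ hCunit X hX
  have hT1 : ∑ ν : Fin 7, Γ ν * ((trace X) • (1:M8)) * Γ ν = (-7 * trace X) • 1 := by
    have : ∀ ν : Fin 7, Γ ν * ((trace X) • (1:M8)) * Γ ν = (trace X) • (-1 : M8) := by
      intro ν
      rw [mul_smul_comm, mul_one, smul_mul_assoc, sq_eq hΓ]
    rw [Finset.sum_congr rfl (fun ν _ => this ν), Finset.sum_const]
    simp only [Finset.card_univ, Fintype.card_fin]
    module
  have h2 : ∑ ν : Fin 7, Γ ν * (∑ μ : Fin 7, Γ μ * X * Γ μ) * Γ ν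
      = X + (6 * trace X) • 1 := by
    rw [h1]
    have expand : ∀ ν : Fin 7, Γ ν * (X - trace X • 1) * Γ ν
        = Γ ν * X * Γ ν - Γ ν * (trace X • (1:M8)) * Γ ν := by
      intro ν
      rw [mul_sub, sub_mul]
    rw [Finset.sum_congr rfl (fun ν _ => expand ν), Finset.sum_sub_distrib, h1, hT1]
    module
  have h3 : ∑ ν : Fin 7, Γ ν * (∑ μ : Fin 7, Γ μ * X * Γ μ) * Γ ν
      = -(∑ μ : Fin 7, ∑ ν : Fin 7, gamma2 Γ μ ν * X * gamma2 Γ μ ν) + (7:ℂ) • X := by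
    have expand : ∀ ν : Fin 7, Γ ν * (∑ μ : Fin 7, Γ μ * X * Γ μ) * Γ ν
        = ∑ μ : Fin 7, Γ ν * (Γ μ * X * Γ μ) * Γ ν := by
      intro ν
      rw [Finset.mul_sum, Finset.sum_mul]
    rw [Finset.sum_congr rfl (fun ν _ => expand ν), Finset.sum_comm]
    have expand2 : ∀ μ : Fin 7, ∑ ν : Fin 7, Γ ν * (Γ μ * X * Γ μ) * Γ ν
        = ∑ ν : Fin 7, (-(gamma2 Γ μ ν * X * gamma2 Γ μ ν) + (if μ = ν then X else 0)) := by
      intro μ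
      exact Finset.sum_congr rfl (fun ν _ => conj_pair hΓ X μ ν)
    rw [Finset.sum_congr rfl (fun μ _ => expand2 μ)]
    simp only [Finset.sum_add_distrib, Finset.sum_neg_distrib]
    congr 1
    simp only [Finset.sum_ite_eq, Finset.mem_univ, if_true, Finset.sum_const,
      Finset.card_univ, Fintype.card_fin]
    module
  have h4 := h3.symm.trans h2
  have h5 : ∑ μ : Fin 7, ∑ ν : Fin 7, gamma2 Γ μ ν * X * gamma2 Γ μ ν
      = (7:ℂ) • X - (X + (6 * trace X) • 1) := by
    rw [← h4]
    abel
  rw [h5]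
  module

include hCΓ in
lemma matrix_main (hCunit : IsUnit C) (hCsymm : Cᵀ = C) (t u : Fin 8 → ℂ) :
    (2 * (t ⬝ᵥ C.mulVec u)) • (1:M8) - (vecMulVec u t + vecMulVec t u) * C
      = (6:ℂ)⁻¹ • ∑ μ : Fin 7, ∑ ν : Fin 7,
          (vecMulVec ((gamma2 Γ μ ν).mulVec u) (C.mulVec ((gamma2 Γ μ ν).mulVec t))
            + vecMulVec ((gamma2 Γ μ ν).mulVec t) (C.mulVec ((gamma2 Γ μ ν).mulVec u))) := by
  set X : M8 := (vecMulVec u t + vecMulVec t u) * C with hXdef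
  have hXsym : Xᵀ * C = C * X := by
    rw [hXdef, transpose_mul, transpose_add, vmv_transpose, vmv_transpose, hCsymm]
    rw [show vecMulVec t u + vecMulVec u t = vecMulVec u t + vecMulVec t u from add_comm _ _]
    rw [mul_assoc]
  have hflip : u ⬝ᵥ C.mulVec t = t ⬝ᵥ C.mulVec u := by
    have hCe : ∀ i j, C i j = C j i := by
      intro i j
      exact congrFun (congrFun hCsymm j) i
    simp only [dotProduct, mulVec, Finset.mul_sum]
    rw [Finset.sum_comm]
    exact Finset.sum_congr rfl fun i _ => Finset.sum_congr rfl fun j _ => by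
      rw [hCe j i]; ring
  have htr : trace X = 2 * (t ⬝ᵥ C.mulVec u) := by
    rw [hXdef, add_mul, trace_add, trace_vmv, trace_vmv, hflip]
    ring
  have hterm : ∀ (μ ν : Fin 7) (x y : Fin 8 → ℂ),
      vecMulVec ((gamma2 Γ μ ν).mulVec x) (C.mulVec ((gamma2 Γ μ ν).mulVec y))
        = -(gamma2 Γ μ ν * (vecMulVec x y * C) * gamma2 Γ μ ν) := by
    intro μ ν x y
    rw [mulVec_mulVec, vmv_left, vmv_right, transpose_mul, hCsymm,
      gamma2_transpose hΓ hCΓ, mul_neg]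
    simp only [mul_neg, mul_assoc]
  have hsum : ∑ μ : Fin 7, ∑ ν : Fin 7,
      (vecMulVec ((gamma2 Γ μ ν).mulVec u) (C.mulVec ((gamma2 Γ μ ν).mulVec t))
        + vecMulVec ((gamma2 Γ μ ν).mulVec t) (C.mulVec ((gamma2 Γ μ ν).mulVec u)))
      = -∑ μ : Fin 7, ∑ ν : Fin 7, gamma2 Γ μ ν * X * gamma2 Γ μ ν := by
    rw [← Finset.sum_neg_distrib]
    apply Finset.sum_congr rfl
    intro μ _
    rw [← Finset.sum_neg_distrib]
    apply Finset.sum_congr rfl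
    intro ν _
    rw [hterm μ ν u t, hterm μ ν t u, hXdef, add_mul, mul_add, add_mul, neg_add]
  rw [hsum, Phi_eq hΓ hCΓ hCunit X hXsym, htr]
  match_scalars <;> ring

omit hΓ in
lemma sum_mulVec (f : Fin 7 → M8) (s : Fin 8 → ℂ) :
    (∑ i : Fin 7, f i).mulVec s = ∑ i : Fin 7, (f i).mulVec s := by
  funext j
  simp only [mulVec, dotProduct, Finset.sum_apply, Matrix.sum_apply, Finset.sum_mul]
  rw [Finset.sum_comm]

end OJ

/-- **Polarized form of the odd Jacobi identity**: for all `s, t, u ∈ ℂ⁸`,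
`2(t̄u)·s − (t̄s)·u − (ūs)·t
  = (1/6)·Σ_{μ,ν=1}^{7}[(s̄Γ_{μν}t)·Γ_{μν}u + (s̄Γ_{μν}u)·Γ_{μν}t]`. -/
theorem polarized_odd_jacobi_identity
    (Γ : Fin 7 → Matrix (Fin 8) (Fin 8) ℂ)
    (hΓ : ∀ μ ν, Γ μ * Γ ν + Γ ν * Γ μ =
      if μ = ν then (-2 : ℂ) • (1 : Matrix (Fin 8) (Fin 8) ℂ) else 0)
    (C : Matrix (Fin 8) (Fin 8) ℂ) (hCunit : IsUnit C) (hCsymm : Cᵀ = C)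
    (hCΓ : ∀ μ, (Γ μ)ᵀ * C = -(C * Γ μ))
    (s t u : Fin 8 → ℂ) :
    (2 : ℂ) • ((t ⬝ᵥ C.mulVec u) • s) - (t ⬝ᵥ C.mulVec s) • u - (u ⬝ᵥ C.mulVec s) • t
      = (6 : ℂ)⁻¹ • ∑ μ, ∑ ν,
          ((s ⬝ᵥ C.mulVec ((gamma2 Γ μ ν).mulVec t)) • (gamma2 Γ μ ν).mulVec u
            + (s ⬝ᵥ C.mulVec ((gamma2 Γ μ ν).mulVec u)) • (gamma2 Γ μ ν).mulVec t) := by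
  have MM := OJ.matrix_main hΓ hCΓ hCunit hCsymm t u
  have happ := congrArg (fun M : Matrix (Fin 8) (Fin 8) ℂ => M.mulVec s) MM
  -- left side
  have hL : ((2 * (t ⬝ᵥ C.mulVec u)) • (1 : Matrix (Fin 8) (Fin 8) ℂ)
        - (vecMulVec u t + vecMulVec t u) * C).mulVec s
      = (2 : ℂ) • ((t ⬝ᵥ C.mulVec u) • s) - (t ⬝ᵥ C.mulVec s) • u - (u ⬝ᵥ C.mulVec s) • t := by
    rw [Matrix.sub_mulVec, Matrix.smul_mulVec, Matrix.one_mulVec, add_mul,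
      Matrix.add_mulVec, ← Matrix.mulVec_mulVec, ← Matrix.mulVec_mulVec,
      OJ.vmv_mulVec, OJ.vmv_mulVec, smul_smul]
    abel
  rw [hL] at happ
  rw [happ, Matrix.smul_mulVec, OJ.sum_mulVec]
  congr 1
  apply Finset.sum_congr rfl
  intro μ _
  rw [OJ.sum_mulVec]
  apply Finset.sum_congr rfl
  intro ν _
  rw [Matrix.add_mulVec, OJ.vmv_mulVec, OJ.vmv_mulVec,
    dotProduct_comm (C.mulVec ((gamma2 Γ μ ν).mulVec t)) s,
    dotProduct_comm (C.mulVec ((gamma2 Γ μ ν).mulVec u)) s]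

end
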